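/- Let t > 0, γ ∈ (0,1), μ > 0, and let r : [0,t] → ℝ be continuous with modulus of continuity κ. For 0 ≤ τ < τ' ≤ t define v(s) = (1/Γ(1−γ)) ∫₀^s e^{−μξ^γ} r(s−ξ)/ξ^γ dξ. Then |v(τ') − v(τ)| ≤ (‖r‖_{[0,t]}/Γ(2−γ)) ((τ')^{1−γ} − τ^{1−γ}) + (κ(τ'−τ)/Γ(2−γ)) τ^{1−γ}, and moreover (τ')^{1−γ} − τ^{1−γ} ≤ (τ' − τ)^{1−γ}. -/

import Mathlib

open MeasureTheory Set
open scoped NNReal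

private lemma stmt19_intable (γ μ t : ℝ) (hγ0 : 0 < γ) (hγ1 : γ < 1)
    (r : ℝ → ℝ) (hr : ContinuousOn r (Icc 0 t)) (s a b : ℝ)
    (ha : 0 ≤ a) (hab : a ≤ b) (hbs : b ≤ s) (hst : s ≤ t) :
    IntervalIntegrable (fun ξ => Real.exp (-(μ * ξ ^ γ)) * r (s - ξ) / ξ ^ γ)
      volume a b := by
  have h1 : IntervalIntegrable (fun ξ : ℝ => ξ ^ (-γ)) volume a b :=
    intervalIntegral.intervalIntegrable_rpow' (by linarith)
  have hcont : ContinuousOn (fun ξ => Real.exp (-(μ * ξ ^ γ)) * r (s - ξ)) (Set.uIcc a b) := by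
    rw [Set.uIcc_of_le hab]
    apply ContinuousOn.mul
    · exact (Real.continuous_exp.comp
        ((continuous_const.mul (Real.continuous_rpow_const hγ0.le)).neg)).continuousOn
    · apply hr.comp (continuous_const.sub continuous_id).continuousOn
      intro ξ hξ
      simp only [Set.mem_Icc, id_eq, Pi.sub_apply] at hξ ⊢
      constructor <;> linarith [hξ.1, hξ.2]
  have h2 := h1.mul_continuousOn hcont
  apply h2.congr
  have hsub : Set.uIoc a b ⊆ {ξ : ℝ | 0 < ξ} ∪ {0} := by
    intro ξ hξ
    rw [Set.uIoc_of_le hab] at hξ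
    left; exact lt_of_le_of_lt ha hξ.1
  intro ξ hξ
  beta_reduce
  rcases hsub hξ with h | h
  · simp only [Set.mem_setOf_eq] at h
    rw [Real.rpow_neg h.le, ← div_eq_inv_mul]
  · simp only [Set.mem_singleton_iff] at h
    subst h
    rw [Real.rpow_neg le_rfl, Real.zero_rpow hγ0.ne']
    simp

theorem stmt19 (γ μ t : ℝ) (hγ0 : 0 < γ) (hγ1 : γ < 1) (hμ : 0 < μ) (ht : 0 < t)
    (r : ℝ → ℝ) (hr : ContinuousOn r (Icc 0 t))
    (R : ℝ) (hR : IsGreatest {y | ∃ ξ ∈ Icc (0:ℝ) t, y = |r ξ|} R)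
    (κ : ℝ → ℝ)
    (hκ : ∀ δ ≥ (0:ℝ), IsGreatest
      {y | ∃ ξ ∈ Icc (0:ℝ) t, ∃ ξ' ∈ Icc (0:ℝ) t, |ξ - ξ'| ≤ δ ∧ y = |r ξ - r ξ'|} (κ δ))
    (v : ℝ → ℝ)
    (hv : ∀ s, v s = (Real.Gamma (1 - γ))⁻¹ *
      ∫ ξ in (0:ℝ)..s, Real.exp (-(μ * ξ ^ γ)) * r (s - ξ) / ξ ^ γ)
    (τ τ' : ℝ) (hτ0 : 0 ≤ τ) (hττ' : τ < τ') (hτ't : τ' ≤ t) :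
    |v τ' - v τ| ≤ R / Real.Gamma (2 - γ) * (τ' ^ (1 - γ) - τ ^ (1 - γ)) +
      κ (τ' - τ) / Real.Gamma (2 - γ) * τ ^ (1 - γ) ∧
    τ' ^ (1 - γ) - τ ^ (1 - γ) ≤ (τ' - τ) ^ (1 - γ) := by
  have h1γ : (0:ℝ) < 1 - γ := by linarith
  -- Second part : subadditivity of rpow
  have part2 : τ' ^ (1 - γ) - τ ^ (1 - γ) ≤ (τ' - τ) ^ (1 - γ) := by
    have key := NNReal.rpow_add_le_add_rpow (Real.toNNReal (τ' - τ)) (Real.toNNReal τ)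
      h1γ.le (by linarith)
    have hcoe : ((Real.toNNReal (τ' - τ) + Real.toNNReal τ : ℝ≥0) : ℝ) = τ' := by
      rw [NNReal.coe_add, Real.coe_toNNReal _ (by linarith), Real.coe_toNNReal _ hτ0]; ring
    have h2 := NNReal.coe_le_coe.mpr key
    push_cast at h2
    rw [Real.coe_toNNReal _ (by linarith : (0:ℝ) ≤ τ' - τ), Real.coe_toNNReal _ hτ0,
      show τ' - τ + τ = τ' by ring] at h2
    linarith
  refine ⟨?_, part2⟩
  -- setup
  have hΓpos : 0 < Real.Gamma (1 - γ) := Real.Gamma_pos_of_pos h1γ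
  have hΓ2 : Real.Gamma (2 - γ) = (1 - γ) * Real.Gamma (1 - γ) := by
    have h : (2:ℝ) - γ = (1 - γ) + 1 := by ring
    rw [h, Real.Gamma_add_one h1γ.ne']
  set f : ℝ → ℝ → ℝ := fun s ξ => Real.exp (-(μ * ξ ^ γ)) * r (s - ξ) / ξ ^ γ with hf
  have hRb : ∀ ξ ∈ Icc (0:ℝ) t, |r ξ| ≤ R := fun ξ h => hR.2 ⟨ξ, h, rfl⟩
  have hR0 : 0 ≤ R := by
    obtain ⟨ξ, _, hy⟩ := hR.1
    rw [hy]; positivity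
  have hκmem := hκ (τ' - τ) (by linarith)
  have hκb : ∀ ξ ∈ Icc (0:ℝ) t, ∀ ξ' ∈ Icc (0:ℝ) t, |ξ - ξ'| ≤ τ' - τ →
      |r ξ - r ξ'| ≤ κ (τ' - τ) := fun ξ hξ ξ' hξ' hd => hκmem.2 ⟨ξ, hξ, ξ', hξ', hd, rfl⟩
  have hκ0 : 0 ≤ κ (τ' - τ) := by
    obtain ⟨ξ, hξ, ξ', hξ', _, hy⟩ := hκmem.1
    rw [hy]; positivity
  -- integrability
  have hi1 : IntervalIntegrable (f τ') volume 0 τ :=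
    stmt19_intable γ μ t hγ0 hγ1 r hr τ' 0 τ le_rfl hτ0 hττ'.le hτ't
  have hi2 : IntervalIntegrable (f τ') volume τ τ' :=
    stmt19_intable γ μ t hγ0 hγ1 r hr τ' τ τ' hτ0 hττ'.le le_rfl hτ't
  have hi3 : IntervalIntegrable (f τ) volume 0 τ :=
    stmt19_intable γ μ t hγ0 hγ1 r hr τ 0 τ le_rfl hτ0 le_rfl (by linarith)
  have hrpowint : ∀ a b : ℝ, IntervalIntegrable (fun ξ : ℝ => ξ ^ (-γ)) volume a b :=
    fun a b => intervalIntegral.intervalIntegrable_rpow' (by linarith)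
  -- decomposition
  have hdecomp : v τ' - v τ = (Real.Gamma (1 - γ))⁻¹ *
      ((∫ ξ in τ..τ', f τ' ξ) + ∫ ξ in (0:ℝ)..τ, (f τ' ξ - f τ ξ)) := by
    rw [hv τ', hv τ, ← intervalIntegral.integral_add_adjacent_intervals hi1 hi2,
      intervalIntegral.integral_sub hi1 hi3]
    ring
  -- bound on exp factor and positivity facts
  have hexp : ∀ ξ : ℝ, 0 ≤ ξ → Real.exp (-(μ * ξ ^ γ)) ≤ 1 := by
    intro ξ hξ
    rw [Real.exp_le_one_iff]
    have : 0 ≤ ξ ^ γ := Real.rpow_nonneg hξ γ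
    nlinarith
  -- bound first integral
  have hA : |∫ ξ in τ..τ', f τ' ξ| ≤ R * ((τ' ^ (1 - γ) - τ ^ (1 - γ)) / (1 - γ)) := by
    have hb : IntervalIntegrable (fun ξ : ℝ => R * ξ ^ (-γ)) volume τ τ' :=
      (hrpowint τ τ').const_mul R
    have hbound := intervalIntegral.norm_integral_le_abs_of_norm_le (μ := volume)
      (f := f τ') (g := fun ξ => R * ξ ^ (-γ)) (a := τ) (b := τ') ?_ hb
    · have hval : (∫ ξ in τ..τ', R * ξ ^ (-γ)) =
          R * ((τ' ^ (1 - γ) - τ ^ (1 - γ)) / (1 - γ)) := by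
        rw [intervalIntegral.integral_const_mul, integral_rpow (Or.inl (by linarith)),
          show -γ + 1 = 1 - γ by ring]
      have hnn : 0 ≤ R * ((τ' ^ (1 - γ) - τ ^ (1 - γ)) / (1 - γ)) := by
        have : τ ^ (1 - γ) ≤ τ' ^ (1 - γ) :=
          Real.rpow_le_rpow hτ0 hττ'.le h1γ.le
        have := div_nonneg (by linarith : (0:ℝ) ≤ τ' ^ (1 - γ) - τ ^ (1 - γ)) h1γ.le
        positivity
      rw [Real.norm_eq_abs] at hbound
      rwa [hval, abs_of_nonneg hnn] at hbound
    · filter_upwards [ae_restrict_mem measurableSet_uIoc] with ξ hξ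
      rw [Set.uIoc_of_le hττ'.le] at hξ
      have hξ0 : 0 < ξ := lt_of_le_of_lt hτ0 hξ.1
      have hξγ : 0 < ξ ^ γ := Real.rpow_pos_of_pos hξ0 γ
      have hmem : τ' - ξ ∈ Icc (0:ℝ) t := ⟨by linarith [hξ.2], by linarith [hξ0]⟩
      rw [Real.norm_eq_abs, hf]
      simp only [abs_div, abs_mul]
      rw [abs_of_nonneg (Real.exp_nonneg _), abs_of_nonneg hξγ.le,
        Real.rpow_neg hξ0.le, ← div_eq_mul_inv]
      apply div_le_div_of_nonneg_right ?_ hξγ.le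
      calc Real.exp (-(μ * ξ ^ γ)) * |r (τ' - ξ)| ≤ 1 * R :=
            mul_le_mul (hexp ξ hξ0.le) (hRb _ hmem) (abs_nonneg _) zero_le_one
        _ = R := one_mul R
  -- bound second integral
  have hB : |∫ ξ in (0:ℝ)..τ, (f τ' ξ - f τ ξ)| ≤
      κ (τ' - τ) * (τ ^ (1 - γ) / (1 - γ)) := by
    have hb : IntervalIntegrable (fun ξ : ℝ => κ (τ' - τ) * ξ ^ (-γ)) volume 0 τ :=
      (hrpowint 0 τ).const_mul _
    have hbound := intervalIntegral.norm_integral_le_abs_of_norm_le (μ := volume)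
      (f := fun ξ => f τ' ξ - f τ ξ) (g := fun ξ => κ (τ' - τ) * ξ ^ (-γ)) (a := 0) (b := τ)
      ?_ hb
    · have hval : (∫ ξ in (0:ℝ)..τ, κ (τ' - τ) * ξ ^ (-γ)) =
          κ (τ' - τ) * (τ ^ (1 - γ) / (1 - γ)) := by
        rw [intervalIntegral.integral_const_mul, integral_rpow (Or.inl (by linarith)),
          show -γ + 1 = 1 - γ by ring, Real.zero_rpow h1γ.ne']
        norm_num
      have hnn : 0 ≤ κ (τ' - τ) * (τ ^ (1 - γ) / (1 - γ)) := by
        have : (0:ℝ) ≤ τ ^ (1 - γ) := Real.rpow_nonneg hτ0 _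
        positivity
      rw [Real.norm_eq_abs] at hbound
      rwa [hval, abs_of_nonneg hnn] at hbound
    · filter_upwards [ae_restrict_mem measurableSet_uIoc] with ξ hξ
      rw [Set.uIoc_of_le hτ0] at hξ
      have hξ0 : 0 < ξ := hξ.1
      have hξγ : 0 < ξ ^ γ := Real.rpow_pos_of_pos hξ0 γ
      have hmem1 : τ' - ξ ∈ Icc (0:ℝ) t := ⟨by linarith [hξ.2], by linarith [hξ0]⟩
      have hmem2 : τ - ξ ∈ Icc (0:ℝ) t := ⟨by linarith [hξ.2], by linarith [hξ0]⟩
      have hdiff : f τ' ξ - f τ ξ =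
          Real.exp (-(μ * ξ ^ γ)) * (r (τ' - ξ) - r (τ - ξ)) / ξ ^ γ := by
        rw [hf]; ring
      rw [Real.norm_eq_abs, hdiff]
      simp only [abs_div, abs_mul]
      rw [abs_of_nonneg (Real.exp_nonneg _), abs_of_nonneg hξγ.le,
        Real.rpow_neg hξ0.le, ← div_eq_mul_inv]
      apply div_le_div_of_nonneg_right ?_ hξγ.le
      have hd : |(τ' - ξ) - (τ - ξ)| ≤ τ' - τ := by
        rw [show (τ' - ξ) - (τ - ξ) = τ' - τ by ring, abs_of_nonneg (by linarith)]
      calc Real.exp (-(μ * ξ ^ γ)) * |r (τ' - ξ) - r (τ - ξ)| ≤ 1 * κ (τ' - τ) :=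
            mul_le_mul (hexp ξ hξ0.le) (hκb _ hmem1 _ hmem2 hd) (abs_nonneg _) zero_le_one
        _ = κ (τ' - τ) := one_mul _
  -- combine
  rw [hdecomp, abs_mul, abs_of_nonneg (inv_nonneg.mpr hΓpos.le)]
  have habs : |(∫ ξ in τ..τ', f τ' ξ) + ∫ ξ in (0:ℝ)..τ, (f τ' ξ - f τ ξ)| ≤
      R * ((τ' ^ (1 - γ) - τ ^ (1 - γ)) / (1 - γ)) + κ (τ' - τ) * (τ ^ (1 - γ) / (1 - γ)) :=
    (abs_add_le _ _).trans (add_le_add hA hB)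
  calc (Real.Gamma (1 - γ))⁻¹ * |(∫ ξ in τ..τ', f τ' ξ) + ∫ ξ in (0:ℝ)..τ, (f τ' ξ - f τ ξ)|
      ≤ (Real.Gamma (1 - γ))⁻¹ *
        (R * ((τ' ^ (1 - γ) - τ ^ (1 - γ)) / (1 - γ)) + κ (τ' - τ) * (τ ^ (1 - γ) / (1 - γ))) :=
        mul_le_mul_of_nonneg_left habs (inv_nonneg.mpr hΓpos.le)
    _ = R / Real.Gamma (2 - γ) * (τ' ^ (1 - γ) - τ ^ (1 - γ)) +
        κ (τ' - τ) / Real.Gamma (2 - γ) * τ ^ (1 - γ) := by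
        rw [hΓ2]
        simp only [div_eq_mul_inv, mul_inv]
        ring
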